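/- If b₀, b₁, b₂ are homogeneous elements of S such that θ(b₀)x₀ + θ(b₁)x₁ + θ(b₂)x₂ = 0 in k[x₀,x₁,x₂], then (b₀,b₁,b₂) is congruent modulo (ker θ)·S³ to an S-linear combination of the eight vectors Y₀₀, Y₀₁, Y₁₀, Y₁₁, Y₁₂, Y₂₀, Y₂₁, Y₂₂ listed in the paper (Y₀₂ being omitted since Y₀₂ = Y₁₁ − Y₂₀). -/

import Mathlib

open MvPolynomial

noncomputable def theta (k : Type*) [CommRing k] :
    MvPolynomial (Fin 6) k →ₐ[k] MvPolynomial (Fin 3) k :=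
  MvPolynomial.aeval
    ![X 0 * X 0, X 0 * X 1, X 0 * X 2, X 1 * X 1, X 1 * X 2, X 2 * X 2]

/-- The eight vectors `Y₀₀, Y₀₁, Y₁₀, Y₁₁, Y₁₂, Y₂₀, Y₂₁, Y₂₂` in `S³`
(`X 0,…,X 5` stand for `x₀₀, x₀₁, x₀₂, x₁₁, x₁₂, x₂₂`). -/
noncomputable def Yvec (k : Type*) [CommRing k] : Fin 8 → (Fin 3 → MvPolynomial (Fin 6) k) :=
  ![![X 1, -X 0, 0],
    ![X 3, -X 1, 0],
    ![X 2, 0, -X 0],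
    ![X 4, 0, -X 1],
    ![X 5, 0, -X 2],
    ![0, X 2, -X 1],
    ![0, X 4, -X 3],
    ![0, X 5, -X 4]]

namespace EvenSyz

/-- parity weight -/
def wpar : Fin 3 → ZMod 2 := fun _ => 1

lemma weight_wpar (d : Fin 3 →₀ ℕ) :
    Finsupp.weight wpar d = ((d 0 + d 1 + d 2 : ℕ) : ZMod 2) := by
  rw [Finsupp.weight_apply, Finsupp.sum_fintype]
  · simp only [wpar, nsmul_eq_mul, mul_one, Fin.sum_univ_three]
    push_cast
    ring
  · intro i; simp

lemma cast_zmod2_eq_zero_iff (n : ℕ) : ((n : ZMod 2) = 0) ↔ Even n := by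
  rw [ZMod.natCast_eq_zero_iff]
  exact ⟨fun h => even_iff_two_dvd.mpr h, fun h => even_iff_two_dvd.mp h⟩

lemma cast_zmod2_eq_one_iff (n : ℕ) : ((n : ZMod 2) = 1) ↔ Odd n := by
  constructor
  · intro h
    rw [← Nat.not_even_iff_odd, ← cast_zmod2_eq_zero_iff]
    rw [h]; decide
  · intro h
    have h2 : ¬ ((n : ZMod 2) = 0) := by
      rw [cast_zmod2_eq_zero_iff]
      exact (Nat.not_even_iff_odd).mpr h
    have : ∀ x : ZMod 2, x = 0 ∨ x = 1 := by decide
    rcases this (n : ZMod 2) with h' | h'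
    · exact absurd h' h2
    · exact h'

variable {k : Type*} [Field k]

lemma sub_single_sum (d : Fin 3 →₀ ℕ) (i : Fin 3) (h : d i ≠ 0) :
    (d - Finsupp.single i 1 : Fin 3 →₀ ℕ) 0 + (d - Finsupp.single i 1 : Fin 3 →₀ ℕ) 1
      + (d - Finsupp.single i 1 : Fin 3 →₀ ℕ) 2 + 1 = d 0 + d 1 + d 2 := by
  fin_cases i <;>
    simp only [Finsupp.tsub_apply, Finsupp.single_apply] <;>
    simp_all <;> omega

lemma X_mul_sub_single (d : Fin 3 →₀ ℕ) (i : Fin 3) (h : d i ≠ 0) (a : k) :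
    (X i : MvPolynomial (Fin 3) k) * monomial (d - Finsupp.single i 1) a = monomial d a := by
  have hle : Finsupp.single i 1 ≤ d := Finsupp.single_le_iff.mpr (Nat.one_le_iff_ne_zero.mpr h)
  rw [X, monomial_mul, one_mul, add_comm (Finsupp.single i 1), tsub_add_cancel_of_le hle]

/-- the quadratic monomials table -/
noncomputable def Q : Fin 3 → Fin 3 → MvPolynomial (Fin 6) k :=
  ![![X 0, X 1, X 2], ![X 1, X 3, X 4], ![X 2, X 4, X 5]]

lemma theta_X (m : Fin 6) :
    theta k (X m) = ![X 0 * X 0, X 0 * X 1, X 0 * X 2, X 1 * X 1, X 1 * X 2, X 2 * X 2] m :=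
  aeval_X _ m

lemma theta_Q (i j : Fin 3) : theta k (Q i j) = X i * X j := by
  fin_cases i <;> fin_cases j
  · exact theta_X 0
  · exact theta_X 1
  · exact theta_X 2
  · exact (theta_X 1).trans (mul_comm (X 0) (X 1))
  · exact theta_X 3
  · exact theta_X 4
  · exact (theta_X 2).trans (mul_comm (X 0) (X 2))
  · exact (theta_X 4).trans (mul_comm (X 1) (X 2))
  · exact theta_X 5

lemma even_monomial_mem_range :
    ∀ (n : ℕ) (d : Fin 3 →₀ ℕ), d 0 + d 1 + d 2 = n → Even n →
      ∃ u : MvPolynomial (Fin 6) k, theta k u = monomial d 1 := by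
  intro n
  induction n using Nat.strong_induction_on with
  | _ n ih =>
    intro d hd he
    rcases Nat.eq_zero_or_pos n with h0 | hpos
    · subst h0
      have h0 : d 0 = 0 := by omega
      have h1 : d 1 = 0 := by omega
      have h2 : d 2 = 0 := by omega
      have hd0 : d = 0 := by
        ext j
        fin_cases j
        · exact h0
        · exact h1
        · exact h2
      refine ⟨1, ?_⟩
      rw [hd0, map_one]
      simp [monomial_zero']
    · -- pick i with d i ≠ 0
      have hi : d 0 ≠ 0 ∨ d 1 ≠ 0 ∨ d 2 ≠ 0 := by omega
      obtain ⟨i, hi⟩ : ∃ i : Fin 3, d i ≠ 0 := by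
        rcases hi with h | h | h
        exacts [⟨0, h⟩, ⟨1, h⟩, ⟨2, h⟩]
      have hsum' : (d - Finsupp.single i 1 : Fin 3 →₀ ℕ) 0
          + (d - Finsupp.single i 1 : Fin 3 →₀ ℕ) 1
          + (d - Finsupp.single i 1 : Fin 3 →₀ ℕ) 2 = n - 1 := by
        have := sub_single_sum d i hi
        omega
      obtain ⟨j, hj⟩ : ∃ j : Fin 3, (d - Finsupp.single i 1 : Fin 3 →₀ ℕ) j ≠ 0 := by
        by_contra hc
        push_neg at hc
        have h0 := hc 0; have h1 := hc 1; have h2 := hc 2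
        rcases he with ⟨m, hm⟩
        omega
      have hsum'' : ((d - Finsupp.single i 1) - Finsupp.single j 1 : Fin 3 →₀ ℕ) 0
          + ((d - Finsupp.single i 1) - Finsupp.single j 1 : Fin 3 →₀ ℕ) 1
          + ((d - Finsupp.single i 1) - Finsupp.single j 1 : Fin 3 →₀ ℕ) 2 = n - 2 := by
        have := sub_single_sum (d - Finsupp.single i 1) j hj
        omega
      have hev : Even (n - 2) := by
        rcases he with ⟨m, hm⟩
        refine ⟨m - 1, by omega⟩
      obtain ⟨u, hu⟩ := ih (n - 2) (by omega) _ hsum'' hev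
      refine ⟨Q i j * u, ?_⟩
      rw [map_mul, theta_Q, hu, mul_assoc, X_mul_sub_single (d - Finsupp.single i 1) j hj,
        X_mul_sub_single d i hi]

lemma range_even (u : MvPolynomial (Fin 6) k) :
    IsWeightedHomogeneous wpar (theta k u) 0 := by
  induction u using MvPolynomial.induction_on with
  | C a =>
    have : theta k (C a) = C a := by simp [theta, algebraMap_eq]
    rw [this]
    exact isWeightedHomogeneous_C _ _
  | add p q hp hq =>
    rw [map_add]
    exact hp.add hq
  | mul_X p m hp =>
    rw [map_mul]
    have h11 : (1 : ZMod 2) + 1 = 0 := by decide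
    have hX : IsWeightedHomogeneous wpar (theta k (X m)) 0 := by
      have hXX : ∀ a b : Fin 3, IsWeightedHomogeneous wpar ((X a * X b : MvPolynomial (Fin 3) k)) 0 := by
        intro a b
        have := (isWeightedHomogeneous_X k wpar a).mul (isWeightedHomogeneous_X k wpar b)
        simpa [wpar, h11] using this
      rw [theta_X m]
      fin_cases m <;> exact hXX _ _
    have := hp.mul hX
    simpa using this

lemma odd_decomp (p : MvPolynomial (Fin 3) k) (hp : IsWeightedHomogeneous wpar p 1) :
    ∃ p0 p1 p2 : MvPolynomial (Fin 6) k,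
      p = X 0 * theta k p0 + X 1 * theta k p1 + X 2 * theta k p2 := by
  have key : ∀ s : Finset (Fin 3 →₀ ℕ), (∀ d ∈ s, Odd (d 0 + d 1 + d 2)) →
      ∃ p0 p1 p2 : MvPolynomial (Fin 6) k,
        ∑ d ∈ s, monomial d (coeff d p)
          = X 0 * theta k p0 + X 1 * theta k p1 + X 2 * theta k p2 := by
    intro s
    induction s using Finset.induction_on with
    | empty => exact fun _ => ⟨0, 0, 0, by simp⟩
    | insert a t hnotmem ihs =>
      intro hodd
      obtain ⟨p0, p1, p2, hrest⟩ := ihs (fun d hd => hodd d (Finset.mem_insert_of_mem hd))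
      have ha : Odd (a 0 + a 1 + a 2) := hodd a (Finset.mem_insert_self a t)
      have step : ∀ i : Fin 3, a i ≠ 0 →
          ∃ w : MvPolynomial (Fin 6) k,
            (monomial a (coeff a p) : MvPolynomial (Fin 3) k) = X i * theta k w := by
        intro i hi
        have hev : Even ((a - Finsupp.single i 1 : Fin 3 →₀ ℕ) 0
            + (a - Finsupp.single i 1 : Fin 3 →₀ ℕ) 1
            + (a - Finsupp.single i 1 : Fin 3 →₀ ℕ) 2) := by
          have := sub_single_sum a i hi
          rcases ha with ⟨m, hm⟩
          exact ⟨m, by omega⟩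
        obtain ⟨u, hu⟩ := even_monomial_mem_range (k := k)
          ((a - Finsupp.single i 1 : Fin 3 →₀ ℕ) 0 + (a - Finsupp.single i 1 : Fin 3 →₀ ℕ) 1
            + (a - Finsupp.single i 1 : Fin 3 →₀ ℕ) 2) (a - Finsupp.single i 1) rfl hev
        refine ⟨C (coeff a p) * u, ?_⟩
        rw [map_mul, hu]
        have hthC : theta k (C (coeff a p)) = C (coeff a p) := by simp [theta, algebraMap_eq]
        rw [hthC]
        rw [show (C (coeff a p) : MvPolynomial (Fin 3) k) * monomial (a - Finsupp.single i 1) 1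
            = monomial (a - Finsupp.single i 1) (coeff a p) by
          rw [C_mul_monomial, mul_one]]
        exact (X_mul_sub_single a i hi _).symm
      obtain hi | hi | hi : a 0 ≠ 0 ∨ a 1 ≠ 0 ∨ a 2 ≠ 0 := by
        by_contra hc
        push_neg at hc
        rcases ha with ⟨m, hm⟩
        omega
      · obtain ⟨w, hw⟩ := step 0 hi
        exact ⟨w + p0, p1, p2, by
          rw [Finset.sum_insert hnotmem, hrest, hw, map_add]; ring⟩
      · obtain ⟨w, hw⟩ := step 1 hi
        exact ⟨p0, w + p1, p2, by
          rw [Finset.sum_insert hnotmem, hrest, hw, map_add]; ring⟩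
      · obtain ⟨w, hw⟩ := step 2 hi
        exact ⟨p0, p1, w + p2, by
          rw [Finset.sum_insert hnotmem, hrest, hw, map_add]; ring⟩
  obtain ⟨p0, p1, p2, h⟩ := key p.support (fun d hd => by
    have := hp (mem_support_iff.mp hd)
    rw [weight_wpar] at this
    exact (cast_zmod2_eq_one_iff _).mp this)
  exact ⟨p0, p1, p2, by rw [← h, support_sum_monomial_coeff]⟩

section evalTricks

lemma dvd_sub_aeval (i : Fin 3) (g : Fin 3 → MvPolynomial (Fin 3) k) (hgi : g i = 0)
    (hg : ∀ j, j ≠ i → g j = X j) (p : MvPolynomial (Fin 3) k) :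
    (X i : MvPolynomial (Fin 3) k) ∣ p - aeval g p := by
  induction p using MvPolynomial.induction_on with
  | C a => simp [aeval_C, algebraMap_eq]
  | add p q hp hq =>
    have : (p + q) - aeval g (p + q) = (p - aeval g p) + (q - aeval g q) := by
      rw [map_add]; ring
    rw [this]
    exact dvd_add hp hq
  | mul_X p j hp =>
    rcases eq_or_ne j i with rfl | hji
    · rw [map_mul, aeval_X, hgi, mul_zero, sub_zero]
      exact dvd_mul_left _ _
    · rw [map_mul, aeval_X, hg j hji,
        show p * X j - aeval g p * X j = (p - aeval g p) * X j by ring]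
      exact hp.mul_right _

end evalTricks

lemma koszul (a0 a1 a2 : MvPolynomial (Fin 3) k)
    (h : a0 * X 0 + a1 * X 1 + a2 * X 2 = 0) :
    ∃ s q0 q1 : MvPolynomial (Fin 3) k,
      a0 = s * X 1 + q0 * X 2 ∧
      a1 = s * (-X 0) + q1 * X 2 ∧
      a2 = q0 * (-X 0) + q1 * (-X 1) := by
  classical
  have hg2i : (![X 0, X 1, 0] : Fin 3 → MvPolynomial (Fin 3) k) 2 = 0 := rfl
  have hg2j : ∀ j, j ≠ 2 → (![X 0, X 1, 0] : Fin 3 → MvPolynomial (Fin 3) k) j = X j := by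
    intro j hj
    fin_cases j
    · rfl
    · rfl
    · exact absurd rfl hj
  have hg1i : (![X 0, 0, X 2] : Fin 3 → MvPolynomial (Fin 3) k) 1 = 0 := rfl
  have hg1j : ∀ j, j ≠ 1 → (![X 0, 0, X 2] : Fin 3 → MvPolynomial (Fin 3) k) j = X j := by
    intro j hj
    fin_cases j
    · rfl
    · exact absurd rfl hj
    · rfl
  obtain ⟨q0, hq0⟩ := dvd_sub_aeval 2 _ hg2i hg2j a0
  obtain ⟨q1, hq1⟩ := dvd_sub_aeval 2 _ hg2i hg2j a1
  have hsub : aeval (![X 0, X 1, 0] : Fin 3 → MvPolynomial (Fin 3) k) a0 * X 0 + aeval (![X 0, X 1, 0] : Fin 3 → MvPolynomial (Fin 3) k) a1 * X 1 = 0 := by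
    have h' := congrArg (aeval (![X 0, X 1, 0] : Fin 3 → MvPolynomial (Fin 3) k)) h
    rw [map_add, map_add, map_mul, map_mul, map_mul, map_zero, aeval_X, aeval_X, aeval_X,
      hg2j 0 (by decide), hg2j 1 (by decide), hg2i, mul_zero, add_zero] at h'
    exact h'
  have h2 : X 2 * (q0 * X 0 + q1 * X 1 + a2) = 0 := by
    linear_combination h - hsub - X 0 * hq0 - X 1 * hq1
  have ha2 : a2 = q0 * (-X 0) + q1 * (-X 1) := by
    have h3 := (mul_eq_zero.mp h2).resolve_left (X_ne_zero 2)
    linear_combination h3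
  have haer0 : aeval (![X 0, 0, X 2] : Fin 3 → MvPolynomial (Fin 3) k) (aeval (![X 0, X 1, 0] : Fin 3 → MvPolynomial (Fin 3) k) a0) = 0 := by
    have h' := congrArg (aeval (![X 0, 0, X 2] : Fin 3 → MvPolynomial (Fin 3) k)) hsub
    rw [map_add, map_mul, map_mul, map_zero, aeval_X, aeval_X,
      hg1j 0 (by decide), hg1i, mul_zero, add_zero] at h'
    exact (mul_eq_zero.mp h').resolve_right (X_ne_zero 0)
  obtain ⟨s, hs⟩ : (X 1 : MvPolynomial (Fin 3) k) ∣ aeval (![X 0, X 1, 0] : Fin 3 → MvPolynomial (Fin 3) k) a0 := by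
    have hd := dvd_sub_aeval 1 _ hg1i hg1j (aeval (![X 0, X 1, 0] : Fin 3 → MvPolynomial (Fin 3) k) a0)
    rwa [haer0, sub_zero] at hd
  refine ⟨s, q0, q1, ?_, ?_, ha2⟩
  · linear_combination hq0 + hs
  · have hkey : X 1 * (aeval (![X 0, X 1, 0] : Fin 3 → MvPolynomial (Fin 3) k) a1 + s * X 0) = 0 := by
      linear_combination hsub - X 0 * hs
    have hr1 := (mul_eq_zero.mp hkey).resolve_left (X_ne_zero 1)
    linear_combination hq1 + hr1

/-- even and odd parts -/
noncomputable def evenPart (p : MvPolynomial (Fin 3) k) : MvPolynomial (Fin 3) k :=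
  ∑ d ∈ p.support.filter (fun d => Even (d 0 + d 1 + d 2)), monomial d (coeff d p)

noncomputable def oddPart (p : MvPolynomial (Fin 3) k) : MvPolynomial (Fin 3) k :=
  ∑ d ∈ p.support.filter (fun d => ¬ Even (d 0 + d 1 + d 2)), monomial d (coeff d p)

lemma even_add_odd (p : MvPolynomial (Fin 3) k) : evenPart p + oddPart p = p := by
  rw [evenPart, oddPart, Finset.sum_filter_add_sum_filter_not, support_sum_monomial_coeff]

lemma isWH_evenPart (p : MvPolynomial (Fin 3) k) :
    IsWeightedHomogeneous wpar (evenPart p) 0 := by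
  apply IsWeightedHomogeneous.sum
  intro d hd
  rw [Finset.mem_filter] at hd
  apply isWeightedHomogeneous_monomial
  rw [weight_wpar]
  exact (cast_zmod2_eq_zero_iff _).mpr hd.2

lemma isWH_oddPart (p : MvPolynomial (Fin 3) k) :
    IsWeightedHomogeneous wpar (oddPart p) 1 := by
  apply IsWeightedHomogeneous.sum
  intro d hd
  rw [Finset.mem_filter] at hd
  apply isWeightedHomogeneous_monomial
  rw [weight_wpar]
  exact (cast_zmod2_eq_one_iff _).mpr (Nat.not_even_iff_odd.mp hd.2)

lemma eq_zero_of_wh01 (f : MvPolynomial (Fin 3) k)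
    (h0 : IsWeightedHomogeneous wpar f 0) (h1 : IsWeightedHomogeneous wpar f 1) : f = 0 := by
  by_contra hf
  have := IsWeightedHomogeneous.inj_right hf h0 h1
  exact absurd this (by decide)

lemma oddify (a u v f g : MvPolynomial (Fin 3) k)
    (ha : IsWeightedHomogeneous wpar a 0)
    (hf : IsWeightedHomogeneous wpar f 1) (hg : IsWeightedHomogeneous wpar g 1)
    (h : a = u * f + v * g) :
    a = oddPart u * f + oddPart v * g := by
  have hu : u = evenPart u + oddPart u := (even_add_odd u).symm
  have hv : v = evenPart v + oddPart v := (even_add_odd v).symm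
  have h11 : (1 : ZMod 2) + 1 = 0 := by decide
  have key : a - (oddPart u * f + oddPart v * g) = evenPart u * f + evenPart v * g := by
    linear_combination h + f * hu + g * hv
  have lhs0 : IsWeightedHomogeneous wpar (a - (oddPart u * f + oddPart v * g)) 0 := by
    refine (weightedHomogeneousSubmodule k wpar 0).sub_mem ha ?_
    refine (weightedHomogeneousSubmodule k wpar 0).add_mem ?_ ?_
    · have := (isWH_oddPart u).mul hf; rwa [h11] at this
    · have := (isWH_oddPart v).mul hg; rwa [h11] at this
  have rhs1 : IsWeightedHomogeneous wpar (evenPart u * f + evenPart v * g) 1 := by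
    refine (weightedHomogeneousSubmodule k wpar 1).add_mem ?_ ?_
    · have := (isWH_evenPart u).mul hf; rwa [zero_add] at this
    · have := (isWH_evenPart v).mul hg; rwa [zero_add] at this
  have : a - (oddPart u * f + oddPart v * g) = 0 :=
    eq_zero_of_wh01 _ lhs0 (key ▸ rhs1)
  linear_combination this

end EvenSyz

open EvenSyz in
theorem even_syzygy_congruent_to_Y_combination (k : Type*) [Field k]
    (b : Fin 3 → MvPolynomial (Fin 6) k) (db : Fin 3 → ℕ)
    (hb : ∀ i, (b i).IsHomogeneous (db i))
    (hsyz : ∑ i : Fin 3, theta k (b i) * X i = 0) :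
    ∃ c : Fin 8 → MvPolynomial (Fin 6) k, ∀ i : Fin 3,
      b i - ∑ j : Fin 8, c j * Yvec k j i ∈
        RingHom.ker ((theta k) : MvPolynomial (Fin 6) k →+* MvPolynomial (Fin 3) k) := by
  rw [Fin.sum_univ_three] at hsyz
  obtain ⟨s, q0, q1, h0, h1, h2⟩ := koszul _ _ _ hsyz
  have ha : ∀ i, IsWeightedHomogeneous wpar (theta k (b i)) 0 := fun i => range_even (b i)
  have hX0 : IsWeightedHomogeneous wpar (-X 0 : MvPolynomial (Fin 3) k) 1 :=
    (weightedHomogeneousSubmodule k wpar 1).neg_mem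
      (by simpa [wpar] using isWeightedHomogeneous_X k wpar (0 : Fin 3))
  have hX1 : IsWeightedHomogeneous wpar (X 1 : MvPolynomial (Fin 3) k) 1 := by
    simpa [wpar] using isWeightedHomogeneous_X k wpar (1 : Fin 3)
  have hX1' : IsWeightedHomogeneous wpar (-X 1 : MvPolynomial (Fin 3) k) 1 :=
    (weightedHomogeneousSubmodule k wpar 1).neg_mem hX1
  have hX2 : IsWeightedHomogeneous wpar (X 2 : MvPolynomial (Fin 3) k) 1 := by
    simpa [wpar] using isWeightedHomogeneous_X k wpar (2 : Fin 3)
  have h0' := oddify _ _ _ _ _ (ha 0) hX1 hX2 h0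
  have h1' := oddify _ _ _ _ _ (ha 1) hX0 hX2 h1
  have h2' := oddify _ _ _ _ _ (ha 2) hX0 hX1' h2
  obtain ⟨s0, s1, s2, hs⟩ := odd_decomp (oddPart s) (isWH_oddPart s)
  obtain ⟨u0, u1, u2, hq0⟩ := odd_decomp (oddPart q0) (isWH_oddPart q0)
  obtain ⟨v0, v1, v2, hq1⟩ := odd_decomp (oddPart q1) (isWH_oddPart q1)
  refine ⟨![s0, s1, u0, u1 + s2, u2, v0 - s2, v1, v2], ?_⟩
  intro i
  rw [RingHom.mem_ker]
  have hmap : ∀ p q : MvPolynomial (Fin 6) k,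
      ((theta k : MvPolynomial (Fin 6) k →+* MvPolynomial (Fin 3) k)) (p - q)
        = theta k p - theta k q := fun p q => map_sub _ p q
  have t0 : theta k (X 0 : MvPolynomial (Fin 6) k) = X 0 * X 0 := theta_X 0
  have t1 : theta k (X 1 : MvPolynomial (Fin 6) k) = X 0 * X 1 := theta_X 1
  have t2 : theta k (X 2 : MvPolynomial (Fin 6) k) = X 0 * X 2 := theta_X 2
  have t3 : theta k (X 3 : MvPolynomial (Fin 6) k) = X 1 * X 1 := theta_X 3
  have t4 : theta k (X 4 : MvPolynomial (Fin 6) k) = X 1 * X 2 := theta_X 4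
  have t5 : theta k (X 5 : MvPolynomial (Fin 6) k) = X 2 * X 2 := theta_X 5
  fin_cases i
  · show ((theta k : MvPolynomial (Fin 6) k →+* MvPolynomial (Fin 3) k))
        (b 0 - ∑ j : Fin 8,
          (![s0, s1, u0, u1 + s2, u2, v0 - s2, v1, v2] : Fin 8 → MvPolynomial (Fin 6) k) j
            * Yvec k j 0) = 0
    rw [show (∑ j : Fin 8,
        (![s0, s1, u0, u1 + s2, u2, v0 - s2, v1, v2] : Fin 8 → MvPolynomial (Fin 6) k) j
          * Yvec k j 0)
        = s0 * X 1 + s1 * X 3 + u0 * X 2 + (u1 + s2) * X 4 + u2 * X 5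
          + (v0 - s2) * 0 + v1 * 0 + v2 * 0 from by rw [Fin.sum_univ_eight]; rfl]
    rw [hmap]
    simp only [map_add, map_mul, map_zero, mul_zero, add_zero, t1, t2, t3, t4, t5]
    linear_combination h0' + X 1 * hs + X 2 * hq0
  · show ((theta k : MvPolynomial (Fin 6) k →+* MvPolynomial (Fin 3) k))
        (b 1 - ∑ j : Fin 8,
          (![s0, s1, u0, u1 + s2, u2, v0 - s2, v1, v2] : Fin 8 → MvPolynomial (Fin 6) k) j
            * Yvec k j 1) = 0
    rw [show (∑ j : Fin 8,
        (![s0, s1, u0, u1 + s2, u2, v0 - s2, v1, v2] : Fin 8 → MvPolynomial (Fin 6) k) j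
          * Yvec k j 1)
        = s0 * (-X 0) + s1 * (-X 1) + u0 * 0 + (u1 + s2) * 0 + u2 * 0
          + (v0 - s2) * X 2 + v1 * X 4 + v2 * X 5 from by rw [Fin.sum_univ_eight]; rfl]
    rw [hmap]
    simp only [map_add, map_sub, map_mul, map_neg, map_zero, mul_zero, add_zero,
      t0, t1, t2, t4, t5]
    linear_combination h1' + (-X 0) * hs + X 2 * hq1
  · show ((theta k : MvPolynomial (Fin 6) k →+* MvPolynomial (Fin 3) k))
        (b 2 - ∑ j : Fin 8,
          (![s0, s1, u0, u1 + s2, u2, v0 - s2, v1, v2] : Fin 8 → MvPolynomial (Fin 6) k) j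
            * Yvec k j 2) = 0
    rw [show (∑ j : Fin 8,
        (![s0, s1, u0, u1 + s2, u2, v0 - s2, v1, v2] : Fin 8 → MvPolynomial (Fin 6) k) j
          * Yvec k j 2)
        = s0 * 0 + s1 * 0 + u0 * (-X 0) + (u1 + s2) * (-X 1) + u2 * (-X 2)
          + (v0 - s2) * (-X 1) + v1 * (-X 3) + v2 * (-X 4) from by rw [Fin.sum_univ_eight]; rfl]
    rw [hmap]
    simp only [map_add, map_sub, map_mul, map_neg, map_zero, mul_zero, zero_add,
      t0, t1, t2, t3, t4]
    linear_combination h2' + (-X 0) * hq0 + (-X 1) * hq1
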